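/- The set of C-finite sequences over a field forms a subalgebra of the algebra of all sequences: it contains constant sequences and is closed under addition, scalar multiplication, and pointwise multiplication. -/

import Mathlib

/-- `a` is C-finite: it satisfies some homogeneous linear recurrence with
constant coefficients. -/
def IsCFinite {K : Type*} [Field K] (a : ℕ → K) : Prop :=
  ∃ (L : ℕ) (c : Fin L → K), ∀ n : ℕ, a (n + L) = ∑ i : Fin L, c i * a (n + i)

namespace CFiniteAux

variable {K : Type*} [Field K]

/-- Shift operator. -/
def S (k : ℕ) (a : ℕ → K) : ℕ → K := fun n => a (n + k)

lemma shifts_mem_span {a : ℕ → K} {L : ℕ} {c : Fin L → K}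
    (h : ∀ n : ℕ, a (n + L) = ∑ i : Fin L, c i * a (n + i)) :
    ∀ k, S k a ∈ Submodule.span K (Set.range fun j : Fin L => S (j : ℕ) a) := by
  intro k
  induction k using Nat.strong_induction_on with
  | _ k ih =>
    by_cases hk : k < L
    · exact Submodule.subset_span ⟨⟨k, hk⟩, rfl⟩
    · obtain ⟨m, rfl⟩ : ∃ m, k = m + L := ⟨k - L, by omega⟩
      have key : S (m + L) a = ∑ i : Fin L, c i • S (m + (i : ℕ)) a := by
        funext n
        simp only [S, Finset.sum_apply, Pi.smul_apply, smul_eq_mul]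
        rw [show n + (m + L) = (n + m) + L by ring, h (n + m)]
        refine Finset.sum_congr rfl fun i _ => ?_
        congr 1
        ring
      rw [key]
      exact Submodule.sum_mem _ fun i _ =>
        Submodule.smul_mem _ _ (ih (m + i) (by omega))

lemma isCFinite_of_mem_span {a : ℕ → K} (W : Submodule K (ℕ → K))
    (hW : FiniteDimensional K W) (h : ∀ k, S k a ∈ W) : IsCFinite a := by
  classical
  set d := Module.finrank K W with hd
  set v : Fin (d + 1) → W := fun i => ⟨S (i : ℕ) a, h i⟩ with hv
  have hnli : ¬ LinearIndependent K v := by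
    intro hli
    have h2 := hli.fintype_card_le_finrank
    simp only [Fintype.card_fin] at h2
    omega
  obtain ⟨g, hg0, i₀, hi₀⟩ := Fintype.not_linearIndependent_iff.mp hnli
  -- extend g to ℕ
  set g' : ℕ → K := fun i => if hi : i < d + 1 then g ⟨i, hi⟩ else 0 with hg'
  have hzero : ∀ n : ℕ, ∑ i ∈ Finset.range (d + 1), g' i * a (n + i) = 0 := by
    intro n
    have := congrFun (congrArg (Subtype.val) hg0) n
    simp only [Submodule.coe_sum, Submodule.coe_smul, Finset.sum_apply,
      Pi.smul_apply, smul_eq_mul, ZeroMemClass.coe_zero, Pi.zero_apply, hv] at this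
    rw [← this, ← Fin.sum_univ_eq_sum_range (fun i => g' i * a (n + i)) (d + 1)]
    refine Finset.sum_congr rfl fun i _ => ?_
    simp [hg', i.isLt, S, not_lt.mpr (Nat.lt_succ_iff.mp i.isLt)]
  -- maximal index with nonzero coefficient
  set T : Finset ℕ := (Finset.range (d + 1)).filter (fun i => g' i ≠ 0) with hT
  have hTne : T.Nonempty := ⟨i₀, by simp [hT, hg', i₀.isLt, hi₀, Nat.lt_succ_iff.mp i₀.isLt]⟩
  set m : ℕ := T.max' hTne with hm
  have hmmem : m ∈ T := T.max'_mem hTne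
  have hgm : g' m ≠ 0 := (Finset.mem_filter.mp hmmem).2
  have hmlt : m < d + 1 := Finset.mem_range.mp (Finset.mem_filter.mp hmmem).1
  have htop : ∀ i, m < i → g' i = 0 := by
    intro i hi
    by_cases hir : i < d + 1
    · by_contra hne
      exact absurd (T.le_max' i (Finset.mem_filter.mpr ⟨Finset.mem_range.mpr hir, hne⟩)) (by omega)
    · simp [hg', hir, show ¬ i ≤ d by omega]
  refine ⟨m, fun i => -(g' i) / g' m, fun n => ?_⟩
  have hsplit : ∑ i ∈ Finset.range (d + 1), g' i * a (n + i)
      = (∑ i ∈ Finset.range m, g' i * a (n + i)) + g' m * a (n + m) := by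
    have h1 : ∑ i ∈ Finset.range (d + 1), g' i * a (n + i)
        = ∑ i ∈ Finset.range (m + 1), g' i * a (n + i) := by
      rw [← Finset.sum_range_add_sum_Ico _ (show m + 1 ≤ d + 1 by omega)]
      have hz : ∑ i ∈ Finset.Ico (m + 1) (d + 1), g' i * a (n + i) = 0 := by
        refine Finset.sum_eq_zero fun i hi => ?_
        rw [htop i (Finset.mem_Ico.mp hi).1, zero_mul]
      rw [hz, add_zero]
    rw [h1, Finset.sum_range_succ]
  have hmain : g' m * a (n + m) = -∑ i ∈ Finset.range m, g' i * a (n + i) := by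
    have hz := hzero n
    rw [hsplit] at hz
    linear_combination hz
  rw [Fin.sum_univ_eq_sum_range (fun i => -(g' i) / g' m * a (n + i)) m]
  calc a (n + m) = (g' m)⁻¹ * (g' m * a (n + m)) := by rw [inv_mul_cancel_left₀ hgm]
    _ = (g' m)⁻¹ * -∑ i ∈ Finset.range m, g' i * a (n + i) := by rw [hmain]
    _ = ∑ i ∈ Finset.range m, -(g' i) / g' m * a (n + i) := by
        rw [← Finset.sum_neg_distrib, Finset.mul_sum]
        exact Finset.sum_congr rfl fun i _ => by ring_nf

lemma shift_add (a b : ℕ → K) (k : ℕ) :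
    S k (fun n => a n + b n) = S k a + S k b := rfl

lemma shift_mul (a b : ℕ → K) (k : ℕ) :
    S k (fun n => a n * b n) = S k a * S k b := rfl

end CFiniteAux

open CFiniteAux Pointwise in
theorem cfinite_subalgebra (K : Type*) [Field K] :
    (∀ k : K, IsCFinite (fun _ => k)) ∧
    (∀ a b : ℕ → K, IsCFinite a → IsCFinite b → IsCFinite (fun n => a n + b n)) ∧
    (∀ (a : ℕ → K) (k : K), IsCFinite a → IsCFinite (fun n => k * a n)) ∧
    (∀ a b : ℕ → K, IsCFinite a → IsCFinite b → IsCFinite (fun n => a n * b n)) := by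
  refine ⟨fun k => ⟨1, fun _ => 1, fun n => by simp⟩, ?_, ?_, ?_⟩
  · rintro a b ⟨La, ca, ha⟩ ⟨Lb, cb, hb⟩
    have fa : (Set.range fun j : Fin La => S (j : ℕ) a).Finite := Set.finite_range _
    have fb : (Set.range fun j : Fin Lb => S (j : ℕ) b).Finite := Set.finite_range _
    refine isCFinite_of_mem_span
      (Submodule.span K (Set.range fun j : Fin La => S (j : ℕ) a) ⊔
       Submodule.span K (Set.range fun j : Fin Lb => S (j : ℕ) b)) ?_ fun k => ?_
    · have h1 := FiniteDimensional.span_of_finite K fa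
      have h2 := FiniteDimensional.span_of_finite K fb
      exact Submodule.finiteDimensional_sup _ _
    · rw [shift_add]
      exact Submodule.add_mem _ (Submodule.mem_sup_left (shifts_mem_span ha k))
        (Submodule.mem_sup_right (shifts_mem_span hb k))
  · rintro a k ⟨L, c, h⟩
    refine ⟨L, c, fun n => ?_⟩
    simp only []
    rw [h n, Finset.mul_sum]
    exact Finset.sum_congr rfl fun i _ => by ring
  · rintro a b ⟨La, ca, ha⟩ ⟨Lb, cb, hb⟩
    have fa : (Set.range fun j : Fin La => S (j : ℕ) a).Finite := Set.finite_range _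
    have fb : (Set.range fun j : Fin Lb => S (j : ℕ) b).Finite := Set.finite_range _
    refine isCFinite_of_mem_span
      (Submodule.span K ((Set.range fun j : Fin La => S (j : ℕ) a) *
        (Set.range fun j : Fin Lb => S (j : ℕ) b))) ?_ fun k => ?_
    · exact FiniteDimensional.span_of_finite K (fa.mul fb)
    · rw [shift_mul, ← Submodule.span_mul_span]
      exact Submodule.mul_mem_mul (shifts_mem_span ha k) (shifts_mem_span hb k)
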